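/- For every A ∈ 𝓜 and all D, x > 1, one has the identity σ_{log(A)}(log D, log x) = (ρ_A(Dx) − ρ_A(x))/log D + ξ_A(D, x). -/

import Mathlib

open MeasureTheory Filter Set Topology

noncomputable section

namespace UPN

/-- The half line `[0,∞)` viewed as a subset of `ℝ`. -/
def Ray : Set ℝ := Set.Ici 0

/-- The indicator function `1_A`. -/
def ind (A : Set ℝ) : ℝ → ℝ := Set.indicator A fun _ => (1 : ℝ)

/-- The collection `𝓜` of countable unions `⋃ᵢ [a_{2i-1}, a_{2i})` for a
nondecreasing nonnegative sequence `a`. -/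
def Mcal : Set (Set ℝ) :=
  {A | ∃ a : ℕ → ℝ, 0 ≤ a 0 ∧ Monotone a ∧
        A = ⋃ i : ℕ, Set.Ico (a (2 * i)) (a (2 * i + 1))}

/-- The density function `ρ_A`: `ρ_A(0) = 0` and `ρ_A(x) = (1/x)∫₀ˣ 1_A(y) dy`. -/
def rho (A : Set ℝ) (x : ℝ) : ℝ :=
  if x = 0 then 0 else (1 / x) * ∫ y in (0:ℝ)..x, ind A y

/-- The collection `𝓒` of elements of `𝓜` having natural density. -/
def Ccal : Set (Set ℝ) :=
  {A | A ∈ Mcal ∧ ∃ l : ℝ, Tendsto (rho A) atTop (𝓝 l)}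

/-- The natural density `λ(A) = lim_{x→∞} ρ_A(x)`. -/
def lam (A : Set ℝ) : ℝ := limUnder atTop (rho A)

/-- `S_A(x) = m(A ∩ [0,x))`. -/
def Sfn (A : Set ℝ) (x : ℝ) : ℝ := (volume (A ∩ Set.Ico 0 x)).toReal

/-- The thinning operation `A ∘ B = {x : x ∈ A ∧ S_A(x) ∈ B}`. -/
def thin (A B : Set ℝ) : Set ℝ := {x | x ∈ A ∧ Sfn A x ∈ B}

/-- An f-system on `[0,∞)`: a nonempty collection of subsets of `[0,∞)` closed
under complements (in `[0,∞)`) and finite disjoint unions. -/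
structure IsFSystem (F : Set (Set ℝ)) : Prop where
  nonempty : F.Nonempty
  subset_ray : ∀ A ∈ F, A ⊆ Ray
  compl_mem : ∀ A ∈ F, Ray \ A ∈ F
  union_mem : ∀ A ∈ F, ∀ B ∈ F, A ∩ B = ∅ → A ∪ B ∈ F

/-- A probability pair `(F, μ)` on `[0,∞)`: `F` is an f-system and `μ` is a finitely
additive probability measure on `F` with values in `[0,1]` and `μ([0,∞)) = 1`. -/
structure IsProbPair (F : Set (Set ℝ)) (μ : Set ℝ → ℝ) : Prop where
  fsystem : IsFSystem F
  nonneg : ∀ A ∈ F, 0 ≤ μ A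
  le_one : ∀ A ∈ F, μ A ≤ 1
  ray_eq_one : μ Ray = 1
  additive : ∀ A ∈ F, ∀ B ∈ F, A ∩ B = ∅ → μ (A ∪ B) = μ A + μ B

/-- A weakly thinnable pair (WTP). -/
structure IsWTP (F : Set (Set ℝ)) (μ : Set ℝ → ℝ) : Prop where
  pair : IsProbPair F μ
  Ccal_subset : Ccal ⊆ F
  subset_Mcal : F ⊆ Mcal
  P1 : ∀ C ∈ Ccal, ∀ A ∈ F, thin C A ∈ F ∧ μ (thin C A) = μ C * μ A
  P2 : ∀ A ∈ F, ∀ B ∈ F, (∀ x : ℝ, Sfn B x ≤ Sfn A x) → μ B ≤ μ A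
  P3 : ∀ c : ℝ, 0 ≤ c → μ (Set.Ici c) = 1

/-- Coherence of a probability measure `μ` on an f-system `F` on `[0,∞)`. -/
def Coherent (F : Set (Set ℝ)) (μ : Set ℝ → ℝ) : Prop :=
  ∀ (n : ℕ) (a : Fin n → ℝ) (A : Fin n → Set ℝ), (∀ i, A i ∈ F) →
    0 ≤ ⨆ x : Ray, ∑ i, a i * (ind (A i) ↑x - μ (A i))

/-- `σ_A(D,x) = (1/D) ∫_x^{x+D} 1_A(y) dy`. -/
def sigmaFn (A : Set ℝ) (D x : ℝ) : ℝ := (1 / D) * ∫ y in x..(x + D), ind A y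

/-- `U(A) = limsup_{D→∞} sup_{x>0} σ_A(D,x)`. -/
def Ufn (A : Set ℝ) : ℝ :=
  limsup (fun D => ⨆ x : Set.Ioi (0:ℝ), sigmaFn A D ↑x) atTop

/-- `L(A) = liminf_{D→∞} inf_{x>0} σ_A(D,x)`. -/
def Lfn (A : Set ℝ) : ℝ :=
  liminf (fun D => ⨅ x : Set.Ioi (0:ℝ), sigmaFn A D ↑x) atTop

/-- `𝓦^uni = {A ∈ 𝓜 : L(A) = U(A)}`. -/
def Wuni : Set (Set ℝ) := {A | A ∈ Mcal ∧ Lfn A = Ufn A}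

/-- `log(A) = {log a : a ∈ A ∩ [1,∞)}`. -/
def logSet (A : Set ℝ) : Set ℝ := Real.log '' (A ∩ Set.Ici 1)

/-- `𝓐^uni = {A ∈ 𝓜 : log(A) ∈ 𝓦^uni}`. -/
def Auni : Set (Set ℝ) := {A | A ∈ Mcal ∧ logSet A ∈ Wuni}

/-- `α(A) = λ(log(A))`. -/
def alphaFn (A : Set ℝ) : ℝ := lam (logSet A)

/-- `ξ_A(D,x) = (1/log D) ∫_x^{Dx} ρ_A(y)/y dy`. -/
def xi (A : Set ℝ) (D x : ℝ) : ℝ :=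
  (1 / Real.log D) * ∫ y in x..(D * x), rho A y / y

/-- Membership in `𝓟`: `s` is a sequence in `(1,∞)` tending to `∞` and `f` is a
sequence in `(1,∞)`. -/
def memP (s f : ℕ → ℝ) : Prop :=
  (∀ n, 1 < s n) ∧ Tendsto s atTop atTop ∧ ∀ n, 1 < f n

/-- `𝓐^{s,f} = {A ∈ 𝓜 : lim_n ξ_A(s_n,f_n) exists}`. -/
def Asf (s f : ℕ → ℝ) : Set (Set ℝ) :=
  {A | A ∈ Mcal ∧ ∃ l : ℝ, Tendsto (fun n => xi A (s n) (f n)) atTop (𝓝 l)}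

/-- `α^{s,f}(A) = lim_n ξ_A(s_n,f_n)`. -/
def alphasf (s f : ℕ → ℝ) (A : Set ℝ) : ℝ :=
  limUnder atTop fun n => xi A (s n) (f n)

/-- `τ_A(C,j)`; here `j : ℕ` starting from `0` corresponds to the interval
`[C^j, C^{j+1})`, i.e. to the paper's `τ_A(C, j+1)`. -/
def tau (A : Set ℝ) (C : ℝ) (j : ℕ) : ℝ :=
  (1 / (C ^ j * (C - 1))) * ∫ y in (C ^ j : ℝ)..(C ^ (j + 1)), ind A y

/-- `U^*(C,A) = limsup_{n→∞} sup_k (1/n) Σ_{j=k}^{k+n-1} τ_A(C,j)`. -/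
def Ustar (C : ℝ) (A : Set ℝ) : ℝ :=
  limsup (fun n : ℕ => ⨆ k : ℕ, (1 / (n : ℝ)) * ∑ i ∈ Finset.range n, tau A C (k + i)) atTop


/-! ### Auxiliary lemmas -/

lemma mcal_measurableSet {A : Set ℝ} (hA : A ∈ Mcal) : MeasurableSet A := by
  obtain ⟨a, -, -, rfl⟩ := hA
  exact MeasurableSet.iUnion fun i => measurableSet_Ico

lemma ind_nonneg' (A : Set ℝ) (y : ℝ) : 0 ≤ ind A y :=
  Set.indicator_nonneg (fun _ _ => zero_le_one) y

lemma ind_le_one' (A : Set ℝ) (y : ℝ) : ind A y ≤ 1 := by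
  unfold ind; by_cases h : y ∈ A <;> simp [h]

lemma abs_ind_le' (A : Set ℝ) (y : ℝ) : |ind A y| ≤ 1 := by
  rw [abs_of_nonneg (ind_nonneg' A y)]; exact ind_le_one' A y

lemma measurable_ind {A : Set ℝ} (hA : MeasurableSet A) : Measurable (ind A) :=
  measurable_const.indicator hA

lemma integrableOn_Ioc_of_bdd {f : ℝ → ℝ} (hf : Measurable f) {a b C : ℝ}
    (h : ∀ y ∈ Set.Ioc a b, |f y| ≤ C) : IntegrableOn f (Set.Ioc a b) volume := by
  refine Measure.integrableOn_of_bounded (M := C) measure_Ioc_lt_top.ne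
    hf.aestronglyMeasurable ?_
  filter_upwards [ae_restrict_mem measurableSet_Ioc] with y hy
  simpa using h y hy

lemma int_inv_sq {a b : ℝ} (ha : 0 < a) (hab : a ≤ b) :
    ∫ y in Set.Ioc a b, (y ^ 2)⁻¹ = a⁻¹ - b⁻¹ := by
  rw [← intervalIntegral.integral_of_le hab]
  have h := integral_zpow (a := a) (b := b) (n := -2)
    (Or.inr ⟨by norm_num, Set.notMem_uIcc_of_lt ha (lt_of_lt_of_le ha hab)⟩)
  norm_num at h
  rw [show a⁻¹ - b⁻¹ = (b⁻¹ - a⁻¹) / -1 by ring]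
  exact h

lemma keyA {A : Set ℝ} (hA : MeasurableSet A) {D x : ℝ} (hD : 1 < D) (hx : 1 < x) :
    ∫ u in Set.Ioc (Real.log x) (Real.log (D * x)), ind (logSet A) u
      = ∫ y in Set.Ioc x (D * x), ind A y / y := by
  have hx0 : (0:ℝ) < x := lt_trans one_pos hx
  have hxDx : x < D * x := by nlinarith
  have hDx0 : (0:ℝ) < D * x := lt_trans hx0 hxDx
  have himg : Real.exp '' Set.Ioc (Real.log x) (Real.log (D * x)) = Set.Ioc x (D * x) := by
    ext y
    simp only [Set.mem_image, Set.mem_Ioc]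
    constructor
    · rintro ⟨u, ⟨h1, h2⟩, rfl⟩
      constructor
      · calc x = Real.exp (Real.log x) := (Real.exp_log hx0).symm
          _ < Real.exp u := Real.exp_lt_exp.mpr h1
      · calc Real.exp u ≤ Real.exp (Real.log (D * x)) := Real.exp_le_exp.mpr h2
          _ = D * x := Real.exp_log hDx0
    · rintro ⟨h1, h2⟩
      have hy0 : 0 < y := lt_trans hx0 h1
      refine ⟨Real.log y, ⟨?_, ?_⟩, Real.exp_log hy0⟩
      · exact Real.log_lt_log hx0 h1
      · exact Real.log_le_log hy0 h2
  have hcv := MeasureTheory.integral_image_eq_integral_abs_deriv_smul (f := Real.exp)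
      (f' := Real.exp) (s := Set.Ioc (Real.log x) (Real.log (D * x))) (measurableSet_Ioc)
      (fun u _ => (Real.hasDerivAt_exp u).hasDerivWithinAt)
      (Real.exp_injective.injOn) (fun y => ind A y / y)
  rw [himg] at hcv
  rw [hcv]
  refine setIntegral_congr_fun measurableSet_Ioc fun u hu => ?_
  have hu0 : 0 < u := lt_trans (Real.log_pos hx) hu.1
  have h1 : Real.exp u ∈ A ↔ u ∈ logSet A := by
    constructor
    · intro h
      exact ⟨Real.exp u, ⟨h, Real.one_le_exp hu0.le⟩, Real.log_exp u⟩
    · rintro ⟨a, ⟨haA, ha1⟩, rfl⟩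
      rwa [Real.exp_log (lt_of_lt_of_le one_pos ha1)]
  have h2 : |Real.exp u| • (ind A (Real.exp u) / Real.exp u) = ind A (Real.exp u) := by
    rw [abs_of_pos (Real.exp_pos u), smul_eq_mul, mul_comm,
      div_mul_cancel₀ _ (Real.exp_pos u).ne']
  rw [h2]
  unfold ind
  by_cases h : u ∈ logSet A
  · rw [Set.indicator_of_mem h, Set.indicator_of_mem (h1.mpr h)]
  · rw [Set.indicator_of_notMem h, Set.indicator_of_notMem (fun hc => h (h1.mp hc))]

lemma keyB {A : Set ℝ} (hA : MeasurableSet A) {D x : ℝ} (hD : 1 < D) (hx : 1 < x) :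
    ∫ y in Set.Ioc x (D * x), rho A y / y =
      (∫ t in Set.Ioc 0 x, ind A t) / x - (∫ t in Set.Ioc 0 (D * x), ind A t) / (D * x)
        + ∫ y in Set.Ioc x (D * x), ind A y / y := by
  have hx0 : (0:ℝ) < x := lt_trans one_pos hx
  have hxDx : x < D * x := by nlinarith
  have hb0 : (0:ℝ) < D * x := lt_trans hx0 hxDx
  set b := D * x with hb
  set S : Set (ℝ × ℝ) := {p : ℝ × ℝ | 0 < p.2 ∧ p.2 < p.1 ∧ x ≤ p.1} with hS
  have hSm : MeasurableSet S := by
    have h : S = {p : ℝ × ℝ | 0 < p.2} ∩ ({p : ℝ × ℝ | p.2 < p.1} ∩ {p : ℝ × ℝ | x ≤ p.1}) := rfl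
    rw [h]
    exact (measurableSet_lt measurable_const measurable_snd).inter
      ((measurableSet_lt measurable_snd measurable_fst).inter
        (measurableSet_le measurable_const measurable_fst))
  set F : ℝ × ℝ → ℝ := S.indicator (fun p => ind A p.2 / p.1 ^ 2) with hF
  have hFm : Measurable F :=
    (((measurable_ind hA).comp measurable_snd).div (measurable_fst.pow_const 2)).indicator hSm
  have hFb : ∀ p, |F p| ≤ 1 := by
    intro p
    rw [hF]
    by_cases hp : p ∈ S
    · rw [Set.indicator_of_mem hp]
      have h1 : (1:ℝ) ≤ p.1 := le_trans hx.le hp.2.2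
      rw [abs_div, abs_of_nonneg (ind_nonneg' _ _), abs_of_nonneg (by positivity : (0:ℝ) ≤ p.1 ^ 2),
        div_le_one (by nlinarith)]
      calc ind A p.2 ≤ 1 := ind_le_one' _ _
        _ ≤ p.1 ^ 2 := by nlinarith
    · rw [Set.indicator_of_notMem hp]; simp
  have hint : Integrable F ((volume.restrict (Set.Ioc x b)).prod (volume.restrict (Set.Ioc 0 b))) := by
    refine Integrable.mono' (integrable_const 1) hFm.aestronglyMeasurable (ae_of_all _ fun p => ?_)
    simpa using hFb p
  have hswap := MeasureTheory.integral_integral_swap (μ := volume.restrict (Set.Ioc x b))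
    (ν := volume.restrict (Set.Ioc 0 b)) (f := fun y t => F (y, t)) hint
  have hL : ∫ y in Set.Ioc x b, rho A y / y = ∫ y in Set.Ioc x b, ∫ t in Set.Ioc 0 b, F (y, t) := by
    refine setIntegral_congr_fun measurableSet_Ioc fun y hy => ?_
    have hy0 : 0 < y := lt_trans hx0 hy.1
    have hxy : x ≤ y := hy.1.le
    have h1 : (fun t => F (y, t)) = (Set.Ioo 0 y).indicator (fun t => ind A t / y ^ 2) := by
      funext t
      by_cases h : t ∈ Set.Ioo 0 y
      · rw [hF, Set.indicator_of_mem h, Set.indicator_of_mem (show (y, t) ∈ S from ⟨h.1, h.2, hxy⟩)]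
      · rw [hF, Set.indicator_of_notMem h, Set.indicator_of_notMem]
        exact fun hc => h ⟨hc.1, hc.2.1⟩
    have h2 : Set.Ioc 0 b ∩ Set.Ioo 0 y = Set.Ioo 0 y :=
      Set.inter_eq_self_of_subset_right (fun t ht => ⟨ht.1, le_of_lt (lt_of_lt_of_le ht.2 hy.2)⟩)
    rw [h1, setIntegral_indicator measurableSet_Ioo, h2, ← integral_Ioc_eq_integral_Ioo,
      integral_div, rho, if_neg hy0.ne', intervalIntegral.integral_of_le hy0.le]
    ring
  have hR : ∀ t ∈ Set.Ioc (0:ℝ) b,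
      (∫ y in Set.Ioc x b, F (y, t)) = ind A t * ((max x t)⁻¹ - b⁻¹) := by
    intro t ht
    have h1 : (fun y => F (y, t)) = (Set.Ioi t ∩ Set.Ici x).indicator (fun y => ind A t / y ^ 2) := by
      funext y
      by_cases h : y ∈ Set.Ioi t ∩ Set.Ici x
      · rw [hF, Set.indicator_of_mem h, Set.indicator_of_mem (show (y, t) ∈ S from ⟨ht.1, h.1, h.2⟩)]
      · rw [hF, Set.indicator_of_notMem h, Set.indicator_of_notMem]
        exact fun hc => h ⟨hc.2.1, hc.2.2⟩
    have h2 : Set.Ioc x b ∩ (Set.Ioi t ∩ Set.Ici x) = Set.Ioc (max x t) b := by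
      ext y
      simp only [Set.mem_inter_iff, Set.mem_Ioc, Set.mem_Ioi, Set.mem_Ici, max_lt_iff]
      constructor
      · rintro ⟨⟨ha', hb'⟩, hc', _⟩; exact ⟨⟨ha', hc'⟩, hb'⟩
      · rintro ⟨⟨ha', hc'⟩, hb'⟩; exact ⟨⟨ha', hb'⟩, hc', ha'.le⟩
    have hm0 : 0 < max x t := lt_of_lt_of_le hx0 (le_max_left x t)
    have hmb : max x t ≤ b := max_le hxDx.le ht.2
    rw [h1, setIntegral_indicator (measurableSet_Ioi.inter measurableSet_Ici), h2,
      show (fun y : ℝ => ind A t / y ^ 2) = fun y : ℝ => ind A t * (y ^ 2)⁻¹ from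
        funext fun y => div_eq_mul_inv _ _,
      integral_const_mul, int_inv_sq hm0 hmb]
  have hRR : (∫ t in Set.Ioc 0 b, ∫ y in Set.Ioc x b, F (y, t))
      = ∫ t in Set.Ioc 0 b, ind A t * ((max x t)⁻¹ - b⁻¹) :=
    setIntegral_congr_fun measurableSet_Ioc hR
  have hgm : Measurable (fun t => ind A t * ((max x t)⁻¹ - b⁻¹)) :=
    (measurable_ind hA).mul (((measurable_const.max measurable_id).inv).sub measurable_const)
  have hgb : ∀ t, |ind A t * ((max x t)⁻¹ - b⁻¹)| ≤ 1 := by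
    intro t
    have hm : x ≤ max x t := le_max_left _ _
    have hm1 : (1:ℝ) ≤ max x t := le_trans hx.le hm
    have hi1 : (max x t)⁻¹ ≤ 1 := by
      rw [inv_le_one_iff₀]; right; exact hm1
    have hi0 : 0 ≤ (max x t)⁻¹ := inv_nonneg.mpr (by linarith)
    have hj1 : b⁻¹ ≤ 1 := by
      rw [inv_le_one_iff₀]; right; nlinarith
    have hj0 : 0 ≤ b⁻¹ := inv_nonneg.mpr hb0.le
    rw [abs_mul]
    calc |ind A t| * |(max x t)⁻¹ - b⁻¹| ≤ 1 * 1 := by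
          apply mul_le_mul (abs_ind_le' _ _) ?_ (abs_nonneg _) zero_le_one
          rw [abs_sub_le_iff]; constructor <;> linarith
      _ = 1 := one_mul 1
  have hsplit : ∫ t in Set.Ioc (0:ℝ) b, ind A t * ((max x t)⁻¹ - b⁻¹)
      = (∫ t in Set.Ioc 0 x, ind A t * ((max x t)⁻¹ - b⁻¹))
        + ∫ t in Set.Ioc x b, ind A t * ((max x t)⁻¹ - b⁻¹) := by
    rw [← setIntegral_union (Set.Ioc_disjoint_Ioc_of_le le_rfl) measurableSet_Ioc
        (integrableOn_Ioc_of_bdd hgm fun y _ => hgb y)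
        (integrableOn_Ioc_of_bdd hgm fun y _ => hgb y),
      Set.Ioc_union_Ioc_eq_Ioc hx0.le hxDx.le]
  have h3 : ∫ t in Set.Ioc (0:ℝ) x, ind A t * ((max x t)⁻¹ - b⁻¹)
      = (∫ t in Set.Ioc 0 x, ind A t) * (x⁻¹ - b⁻¹) := by
    rw [← integral_mul_const]
    refine setIntegral_congr_fun measurableSet_Ioc fun t ht => ?_
    rw [max_eq_left ht.2]
  have h4 : ∫ t in Set.Ioc x b, ind A t * ((max x t)⁻¹ - b⁻¹)
      = (∫ t in Set.Ioc x b, ind A t / t) - (∫ t in Set.Ioc x b, ind A t) * b⁻¹ := by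
    have e1 : ∀ t ∈ Set.Ioc x b, ind A t * ((max x t)⁻¹ - b⁻¹)
        = ind A t / t - ind A t * b⁻¹ := by
      intro t ht
      rw [max_eq_right ht.1.le, mul_sub, div_eq_mul_inv]
    rw [setIntegral_congr_fun measurableSet_Ioc e1, integral_sub, integral_mul_const]
    · refine integrableOn_Ioc_of_bdd (C := 1) ((measurable_ind hA).div measurable_id) fun t ht => ?_
      have ht1 : (1:ℝ) ≤ t := le_trans hx.le ht.1.le
      simp only [Pi.div_apply, id_eq]
      rw [abs_div, div_le_one (by linarith [abs_of_pos (lt_of_lt_of_le zero_lt_one ht1)] : (0:ℝ) < |t|)]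
      calc |ind A t| ≤ 1 := abs_ind_le' _ _
        _ ≤ |t| := by rw [abs_of_pos (lt_of_lt_of_le zero_lt_one ht1)]; exact ht1
    · refine integrableOn_Ioc_of_bdd (C := 1) ((measurable_ind hA).mul measurable_const) fun t _ => ?_
      rw [Pi.mul_apply, abs_mul]
      have hj1 : |b⁻¹| ≤ 1 := by
        rw [abs_of_nonneg (inv_nonneg.mpr hb0.le), inv_le_one_iff₀]; right; nlinarith
      calc |ind A t| * |b⁻¹| ≤ 1 * 1 :=
            mul_le_mul (abs_ind_le' _ _) hj1 (abs_nonneg _) zero_le_one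
        _ = 1 := one_mul 1
  have h5 : ∫ t in Set.Ioc (0:ℝ) b, ind A t
      = (∫ t in Set.Ioc 0 x, ind A t) + ∫ t in Set.Ioc x b, ind A t := by
    rw [← setIntegral_union (Set.Ioc_disjoint_Ioc_of_le le_rfl) measurableSet_Ioc
        (integrableOn_Ioc_of_bdd (measurable_ind hA) fun y _ => abs_ind_le' A y)
        (integrableOn_Ioc_of_bdd (measurable_ind hA) fun y _ => abs_ind_le' A y),
      Set.Ioc_union_Ioc_eq_Ioc hx0.le hxDx.le]
  rw [hL, hswap, hRR, hsplit, h3, h4, h5]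
  ring

/-- For `A ∈ 𝓜` and `D, x > 1`:
`σ_{log(A)}(log D, log x) = (ρ_A(Dx) − ρ_A(x))/log D + ξ_A(D,x)`. -/
theorem stmt11 (A : Set ℝ) (hA : A ∈ Mcal) (D x : ℝ) (hD : 1 < D) (hx : 1 < x) :
    sigmaFn (logSet A) (Real.log D) (Real.log x) =
      (rho A (D * x) - rho A x) / Real.log D + xi A D x := by
  have hA' : MeasurableSet A := mcal_measurableSet hA
  have hx0 : (0:ℝ) < x := lt_trans one_pos hx
  have hD0 : (0:ℝ) < D := lt_trans one_pos hD
  have hxDx : x < D * x := by nlinarith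
  have hlogD : 0 < Real.log D := Real.log_pos hD
  have hlog_add : Real.log x + Real.log D = Real.log (D * x) := by
    rw [Real.log_mul hD0.ne' hx0.ne']; ring
  have hle : Real.log x ≤ Real.log (D * x) := by linarith
  have hrx : rho A x = (∫ t in Set.Ioc 0 x, ind A t) / x := by
    rw [rho, if_neg hx0.ne', intervalIntegral.integral_of_le hx0.le]; ring
  have hrDx : rho A (D * x) = (∫ t in Set.Ioc 0 (D * x), ind A t) / (D * x) := by
    have h : (0:ℝ) < D * x := lt_trans hx0 hxDx
    rw [rho, if_neg h.ne', intervalIntegral.integral_of_le h.le]; ring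
  unfold sigmaFn xi
  rw [hlog_add, intervalIntegral.integral_of_le hle, keyA hA' hD hx,
    intervalIntegral.integral_of_le hxDx.le, keyB hA' hD hx, hrx, hrDx]
  ring

end UPN
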